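/- For every finite player set N, every embedded coalition (T,τ) of N, and every coalition S ⊆ N, the restriction of the scaled Dirac game δ_{T,τ} by removing the players of S satisfies: (δ_{T,τ})_{−S} = δ_{T,τ_{−S}} if S ∩ T = ∅, and (δ_{T,τ})_{−S} is the null game on N\S otherwise. -/

import Mathlib

open Finset BigOperators

namespace TUX

/-- A (raw) game in partition function form: assigns a real worth to each
coalition together with a partition (of the outside players). -/
abbrev Game := Finset ℕ → Finset (Finset ℕ) → ℝ

/-- A TU game (characteristic function). -/
abbrev TUGame := Finset ℕ → ℝ

/-- A solution for TUX games: given a player set and a game, assigns payoffs. -/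
abbrev Sol := Finset ℕ → Game → ℕ → ℝ

/-- `w` is a genuine TUX game: the empty coalition has worth 0. -/
def IsTUX (w : Game) : Prop := ∀ π, w ∅ π = 0

/-- `π` is a partition of the finite set `M`. -/
def IsPartition (M : Finset ℕ) (π : Finset (Finset ℕ)) : Prop :=
  (∀ B ∈ π, B ⊆ M) ∧ ∅ ∉ π ∧ ∀ x ∈ M, (π.filter (fun B => x ∈ B)).card = 1

instance (M : Finset ℕ) : DecidablePred (IsPartition M) := fun π => by
  unfold IsPartition; infer_instance

/-- The finite set of all partitions of `M`. -/
def partitionsOf (M : Finset ℕ) : Finset (Finset (Finset ℕ)) :=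
  (M.powerset.powerset).filter (IsPartition M)

/-- The Ewens(θ = 1) probability of the partition `π` of `M`:
`p*_M(π) = ∏_{B ∈ π} (|B| - 1)! / |M|!`. -/
noncomputable def pstar (M : Finset ℕ) (π : Finset (Finset ℕ)) : ℝ :=
  (∏ B ∈ π, ((B.card - 1).factorial : ℝ)) / (M.card.factorial : ℝ)

/-- The block of `π` containing `j` (junk if `π` is not a partition containing `j`). -/
def blockOf (π : Finset (Finset ℕ)) (j : ℕ) : Finset ℕ :=
  (π.filter (fun B => j ∈ B)).sup id

/-- Add player `i` to the block `B` of `π`. -/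
def addToBlock (π : Finset (Finset ℕ)) (i : ℕ) (B : Finset ℕ) : Finset (Finset ℕ) :=
  insert (insert i B) (π.erase B)

/-- The restriction operator `r⋆` removing a single player `i` from a game on `N`:
`w₋ᵢ(S,π) = (1/(n-s)) (w(S, π₊ᵢ⇝∅) + ∑_{j ∈ N∖(S∪{i})} w(S, π₊ᵢ⇝π(j)))`. -/
noncomputable def restrict1 (N : Finset ℕ) (w : Game) (i : ℕ) : Game :=
  fun S π =>
    ((N.card : ℝ) - (S.card : ℝ))⁻¹ *
      (w S (insert {i} π) + ∑ j ∈ (N \ S).erase i, w S (addToBlock π i (blockOf π j)))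

/-- Iterated removal of a list of players. -/
noncomputable def restrictL : Finset ℕ → Game → List ℕ → Game
  | _, w, [] => w
  | N, w, i :: l => restrictL (N.erase i) (restrict1 N w i) l

/-- Removal of a set of players (via the increasing enumeration; by path
independence of `r⋆` the order is immaterial). -/
noncomputable def restrictSet (N : Finset ℕ) (w : Game) (T : Finset ℕ) : Game :=
  restrictL N w (T.sort (· ≤ ·))

/-- The average TU game `v̄_w` of a TUX game `w` on `N`. -/
noncomputable def avg (N : Finset ℕ) (w : Game) : TUGame :=
  fun S => ∑ π ∈ partitionsOf (N \ S), pstar (N \ S) π * w S π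

/-- The auxiliary TU game `v*_w(S) = w₋(N∖S)(S,∅)`. -/
noncomputable def auxGame (N : Finset ℕ) (w : Game) : TUGame :=
  fun S => restrictSet N w (N \ S) S ∅

/-- The Shapley value of a TU game on player set `N`. -/
noncomputable def shapley (N : Finset ℕ) (v : TUGame) (i : ℕ) : ℝ :=
  ∑ S ∈ (N.erase i).powerset,
    (((S.card.factorial : ℝ) * ((N.card - S.card - 1).factorial : ℝ)) / (N.card.factorial : ℝ)) *
      (v (insert i S) - v S)

/-- The MPW solution: the Shapley value of the average game. -/
noncomputable def MPW (N : Finset ℕ) (w : Game) (i : ℕ) : ℝ := shapley N (avg N w) i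

/-- The MPW solution as a solution for TUX games. -/
noncomputable def MPWsol : Sol := fun N w i => MPW N w i

/-- The scaled Dirac TUX game `δ_{T,τ}` on `N`. -/
noncomputable def scaledDirac (N T : Finset ℕ) (τ : Finset (Finset ℕ)) : Game :=
  fun S π => if S = T ∧ π = τ then (pstar (N \ T) τ)⁻¹ else 0

/-- `τ₋S`: remove the players of `S` from each block of `τ`, discarding empty blocks. -/
def partRemove (τ : Finset (Finset ℕ)) (S : Finset ℕ) : Finset (Finset ℕ) :=
  (τ.image (fun B => B \ S)).erase ∅

/-- The Sobolev-reduced TUX game `w₋ⱼ^{So,φ}` on `N ∖ {j}`. -/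
noncomputable def sobRed (N : Finset ℕ) (φ : Sol) (w : Game) (j : ℕ) : Game :=
  fun S π =>
    ((S.card : ℝ) / ((N.card : ℝ) - 1)) * (w (insert j S) π - φ N w j) +
      (1 - (S.card : ℝ) / ((N.card : ℝ) - 1)) * restrict1 N w j S π

/-- The Hart–Mas-Colell reduced TUX game `w₋T^{HM,φ}` on `N ∖ T`. -/
noncomputable def hmRed (N : Finset ℕ) (φ : Sol) (w : Game) (T : Finset ℕ) : Game :=
  fun S π => w (S ∪ T) π - ∑ j ∈ T, φ (S ∪ T) (restrictSet N w (N \ (S ∪ T))) j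

/-- Efficiency for TUX games. -/
def EfficientX (φ : Sol) : Prop :=
  ∀ (N : Finset ℕ) (w : Game), IsTUX w → ∑ i ∈ N, φ N w i = w N ∅

/-- Balanced contributions for TUX games (w.r.t. the restriction operator `r⋆`). -/
def BalancedContributionsX (φ : Sol) : Prop :=
  ∀ (N : Finset ℕ) (w : Game), IsTUX w → ∀ i ∈ N, ∀ j ∈ N,
    φ N w i - φ (N.erase j) (restrict1 N w j) i
      = φ N w j - φ (N.erase i) (restrict1 N w i) j

/-- 2-standardness for TUX games. -/
def TwoStandardX (φ : Sol) : Prop :=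
  ∀ i j : ℕ, i ≠ j → ∀ w : Game, IsTUX w →
    φ {i, j} w i
      = w {i} {({j} : Finset ℕ)}
        + (w {i, j} ∅ - w {j} {({i} : Finset ℕ)} - w {i} {({j} : Finset ℕ)}) / 2

/-- Sobolev consistency for TUX games. -/
def SobolevConsistentX (φ : Sol) : Prop :=
  ∀ (N : Finset ℕ) (w : Game), IsTUX w → ∀ i ∈ N, ∀ j ∈ N, i ≠ j →
    φ N w i = φ (N.erase j) (sobRed N φ w j) i

/-- Hart–Mas-Colell consistency (single-player removal) for TUX games. -/
def HMConsistentX (φ : Sol) : Prop :=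
  ∀ (N : Finset ℕ) (w : Game), IsTUX w → ∀ i ∈ N, ∀ j ∈ N, i ≠ j →
    φ N w i = φ (N.erase j) (hmRed N φ w {j}) i

/-- Set Hart–Mas-Colell consistency (removal of a coalition) for TUX games. -/
def SetHMConsistentX (φ : Sol) : Prop :=
  ∀ (N : Finset ℕ) (w : Game), IsTUX w → ∀ i ∈ N, ∀ T ⊆ N.erase i,
    φ N w i = φ (N \ T) (hmRed N φ w T) i

/-- The finite set of embedded coalitions `(T,τ)` of `N` with `T ≠ ∅`. -/
def embeddedNE (N : Finset ℕ) : Finset (Finset ℕ × Finset (Finset ℕ)) :=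
  (N.powerset ×ˢ N.powerset.powerset).filter
    (fun p => p.1.Nonempty ∧ IsPartition (N \ p.1) p.2)

end TUX
namespace TUX
open Finset

lemma filter_eq_blockOf {M : Finset ℕ} {π : Finset (Finset ℕ)} (h : IsPartition M π)
    {x : ℕ} (hx : x ∈ M) : π.filter (fun B => x ∈ B) = {blockOf π x} := by
  obtain ⟨B, hB⟩ := Finset.card_eq_one.mp (h.2.2 x hx)
  rw [hB]
  congr 1
  unfold blockOf
  rw [hB]
  simp

lemma blockOf_mem {M : Finset ℕ} {π : Finset (Finset ℕ)} (h : IsPartition M π)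
    {x : ℕ} (hx : x ∈ M) : blockOf π x ∈ π := by
  have h1 := filter_eq_blockOf h hx
  have h2 : blockOf π x ∈ π.filter (fun B => x ∈ B) := h1 ▸ mem_singleton_self _
  exact (mem_filter.mp h2).1

lemma mem_blockOf {M : Finset ℕ} {π : Finset (Finset ℕ)} (h : IsPartition M π)
    {x : ℕ} (hx : x ∈ M) : x ∈ blockOf π x := by
  have h1 := filter_eq_blockOf h hx
  have h2 : blockOf π x ∈ π.filter (fun B => x ∈ B) := h1 ▸ mem_singleton_self _
  exact (mem_filter.mp h2).2

lemma blockOf_eq {M : Finset ℕ} {π : Finset (Finset ℕ)} (h : IsPartition M π)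
    {B : Finset ℕ} {x : ℕ} (hB : B ∈ π) (hx : x ∈ B) : blockOf π x = B := by
  have hxM : x ∈ M := h.1 B hB hx
  have h1 := filter_eq_blockOf h hxM
  have h2 : B ∈ π.filter (fun B => x ∈ B) := mem_filter.mpr ⟨hB, hx⟩
  rw [h1, mem_singleton] at h2
  exact h2.symm

lemma not_mem_block {M : Finset ℕ} {i : ℕ} {π : Finset (Finset ℕ)}
    (h : IsPartition (M.erase i) π) {B : Finset ℕ} (hB : B ∈ π) : i ∉ B :=
  fun hiB => (Finset.notMem_erase i M) (h.1 B hB hiB)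

lemma erase_sdiff_comm' (N R : Finset ℕ) (i : ℕ) : (N.erase i) \ R = (N \ R).erase i := by
  ext x; simp [mem_erase, mem_sdiff]; tauto

lemma isPartition_insert_singleton {M : Finset ℕ} {i : ℕ} {π : Finset (Finset ℕ)}
    (h : IsPartition (M.erase i) π) (hi : i ∈ M) : IsPartition M (insert {i} π) := by
  refine ⟨?_, ?_, ?_⟩
  · intro B hB
    rcases mem_insert.mp hB with rfl | hB
    · simpa using hi
    · exact (h.1 B hB).trans (erase_subset _ _)
  · rw [mem_insert]
    push_neg
    exact ⟨(Finset.singleton_ne_empty i).symm, h.2.1⟩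
  · intro x hx
    by_cases hxi : x = i
    · subst hxi
      rw [filter_insert, if_pos (mem_singleton_self x)]
      have h0 : π.filter (fun B => x ∈ B) = ∅ :=
        filter_eq_empty_iff.mpr (fun B hB => not_mem_block h hB)
      rw [h0]
      simp
    · have hx' : x ∈ M.erase i := mem_erase.mpr ⟨hxi, hx⟩
      rw [filter_insert, if_neg (by simp [hxi])]
      exact h.2.2 x hx'

lemma isPartition_addToBlock {M : Finset ℕ} {i : ℕ} {π : Finset (Finset ℕ)}
    (h : IsPartition (M.erase i) π) (hi : i ∈ M) {j : ℕ} (hj : j ∈ M.erase i) :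
    IsPartition M (addToBlock π i (blockOf π j)) := by
  set B₀ := blockOf π j with hB₀def
  have hB₀π : B₀ ∈ π := blockOf_mem h hj
  have hjB₀ : j ∈ B₀ := mem_blockOf h hj
  have hiB₀ : i ∉ B₀ := not_mem_block h hB₀π
  unfold addToBlock
  refine ⟨?_, ?_, ?_⟩
  · intro B hB
    rcases mem_insert.mp hB with rfl | hB
    · intro x hx
      rcases mem_insert.mp hx with rfl | hx
      · exact hi
      · exact (erase_subset _ _) (h.1 B₀ hB₀π hx)
    · exact (h.1 B (erase_subset _ _ hB)).trans (erase_subset _ _)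
  · rw [mem_insert]
    push_neg
    refine ⟨?_, fun h0 => h.2.1 (erase_subset _ _ h0)⟩
    intro h0
    exact (Finset.notMem_empty i) (h0 ▸ mem_insert_self i B₀)
  · intro x hx
    by_cases hxi : x = i
    · subst hxi
      rw [filter_insert, if_pos (mem_insert_self x B₀)]
      have h0 : (π.erase B₀).filter (fun B => x ∈ B) = ∅ :=
        filter_eq_empty_iff.mpr (fun B hB => not_mem_block h (erase_subset _ _ hB))
      rw [h0]
      simp
    · have hx' : x ∈ M.erase i := mem_erase.mpr ⟨hxi, hx⟩
      have hfil := filter_eq_blockOf h hx'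
      rw [filter_insert]
      by_cases hxB₀ : x ∈ B₀
      · rw [if_pos (mem_insert_of_mem hxB₀)]
        have hBx : blockOf π x = B₀ := blockOf_eq h hB₀π hxB₀
        rw [filter_erase, hfil, hBx]
        simp
      · rw [if_neg (by simp [hxi, hxB₀])]
        have hBx : blockOf π x ≠ B₀ := fun he => hxB₀ (he ▸ mem_blockOf h hx')
        rw [filter_erase, hfil]
        rw [Finset.erase_eq_of_notMem (by simp [hBx.symm])]
        simp

end TUX
namespace TUX
open Finset

lemma partRemove_empty {τ : Finset (Finset ℕ)} (h : ∅ ∉ τ) : partRemove τ ∅ = τ := by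
  unfold partRemove
  rw [show (fun B => B \ (∅ : Finset ℕ)) = id by funext B; simp, Finset.image_id]
  exact Finset.erase_eq_of_notMem h

lemma sdiff_sdiff_un (E A B : Finset ℕ) : (E \ A) \ B = E \ (A ∪ B) := by
  ext x; simp [mem_sdiff]; tauto

lemma partRemove_partRemove (τ : Finset (Finset ℕ)) (A B : Finset ℕ) :
    partRemove (partRemove τ A) B = partRemove τ (A ∪ B) := by
  unfold partRemove
  ext C
  simp only [mem_erase, mem_image]
  constructor
  · rintro ⟨hC, D, ⟨hDne, E, hE, rfl⟩, rfl⟩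
    exact ⟨hC, E, hE, (sdiff_sdiff_un E A B).symm⟩
  · rintro ⟨hC, E, hE, rfl⟩
    refine ⟨hC, E \ A, ⟨?_, E, hE, rfl⟩, sdiff_sdiff_un E A B⟩
    intro h0
    apply hC
    rw [← sdiff_sdiff_un, h0]
    simp

lemma partRemove_isPartition {M : Finset ℕ} {π : Finset (Finset ℕ)} (h : IsPartition M π)
    (S : Finset ℕ) : IsPartition (M \ S) (partRemove π S) := by
  refine ⟨?_, ?_, ?_⟩
  · intro B hB
    obtain ⟨hne, hBim⟩ := mem_erase.mp hB
    obtain ⟨E, hE, rfl⟩ := mem_image.mp hBim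
    exact sdiff_subset_sdiff (h.1 E hE) Subset.rfl
  · simp [partRemove]
  · intro x hx
    obtain ⟨hxM, hxS⟩ := mem_sdiff.mp hx
    rw [Finset.card_eq_one]
    refine ⟨(blockOf π x) \ S, ?_⟩
    ext C
    simp only [mem_filter, mem_singleton, partRemove, mem_erase, mem_image]
    constructor
    · rintro ⟨⟨hCne, E, hE, rfl⟩, hxC⟩
      rw [blockOf_eq h hE (mem_sdiff.mp hxC).1]
    · rintro rfl
      have hxB : x ∈ blockOf π x \ S := mem_sdiff.mpr ⟨mem_blockOf h hxM, hxS⟩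
      exact ⟨⟨ne_empty_of_mem hxB, blockOf π x, blockOf_mem h hxM, rfl⟩, hxB⟩

end TUX
namespace TUX
open Finset

lemma partRemove_singleton_of_eq {M : Finset ℕ} {τ : Finset (Finset ℕ)} {i : ℕ}
    (h : IsPartition M τ) (hi : i ∈ M) (hC : blockOf τ i = {i}) :
    partRemove τ {i} = τ.erase {i} := by
  ext B'
  simp only [partRemove, mem_erase, mem_image]
  constructor
  · rintro ⟨hne, B, hB, rfl⟩
    by_cases hiB : i ∈ B
    · exact absurd (by rw [← blockOf_eq h hB hiB, hC]; simp) hne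
    · rw [sdiff_singleton_eq_erase, Finset.erase_eq_of_notMem hiB]
      refine ⟨?_, hB⟩
      intro h0
      exact hiB (h0 ▸ mem_singleton_self i)
  · rintro ⟨hne, hB'⟩
    have hiB' : i ∉ B' := fun hiB' => hne (hC ▸ blockOf_eq h hB' hiB').symm
    refine ⟨fun h0 => h.2.1 (h0 ▸ hB'), B', hB', ?_⟩
    rw [sdiff_singleton_eq_erase, Finset.erase_eq_of_notMem hiB']

lemma partRemove_singleton_of_ne {M : Finset ℕ} {τ : Finset (Finset ℕ)} {i : ℕ}
    (h : IsPartition M τ) (hi : i ∈ M) (hC : blockOf τ i ≠ {i}) :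
    partRemove τ {i} = insert ((blockOf τ i).erase i) (τ.erase (blockOf τ i)) := by
  have hCτ : blockOf τ i ∈ τ := blockOf_mem h hi
  have hiC : i ∈ blockOf τ i := mem_blockOf h hi
  have hCne : (blockOf τ i).erase i ≠ ∅ := by
    intro h0
    rcases (Finset.erase_eq_empty_iff _ _).mp h0 with h1 | h1
    · exact (Finset.notMem_empty i) (h1 ▸ hiC)
    · exact hC h1
  ext B'
  simp only [partRemove, mem_erase, mem_image, mem_insert]
  constructor
  · rintro ⟨hne, B, hB, rfl⟩
    by_cases hiB : i ∈ B
    · left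
      rw [← blockOf_eq h hB hiB, sdiff_singleton_eq_erase]
    · right
      rw [sdiff_singleton_eq_erase, Finset.erase_eq_of_notMem hiB]
      exact ⟨fun h0 => hiB (h0 ▸ hiC), hB⟩
  · rintro (rfl | ⟨hne, hB'⟩)
    · exact ⟨hCne, blockOf τ i, hCτ, sdiff_singleton_eq_erase _ _⟩
    · have hiB' : i ∉ B' := fun hiB' => hne (blockOf_eq h hB' hiB').symm
      refine ⟨fun h0 => h.2.1 (h0 ▸ hB'), B', hB', ?_⟩
      rw [sdiff_singleton_eq_erase, Finset.erase_eq_of_notMem hiB']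

lemma insert_singleton_eq_iff {M : Finset ℕ} {τ π : Finset (Finset ℕ)} {i : ℕ}
    (hτ : IsPartition M τ) (hi : i ∈ M) (hπ : IsPartition (M.erase i) π) :
    insert {i} π = τ ↔ (blockOf τ i = {i} ∧ π = partRemove τ {i}) := by
  constructor
  · intro h
    have hmem : {i} ∈ τ := h ▸ mem_insert_self _ _
    have hC : blockOf τ i = {i} := blockOf_eq hτ hmem (mem_singleton_self i)
    have hnm : ({i} : Finset ℕ) ∉ π := fun h0 => (not_mem_block hπ h0) (mem_singleton_self i)
    refine ⟨hC, ?_⟩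
    rw [partRemove_singleton_of_eq hτ hi hC, ← h, Finset.erase_insert hnm]
  · rintro ⟨hC, rfl⟩
    rw [partRemove_singleton_of_eq hτ hi hC, insert_erase (hC ▸ blockOf_mem hτ hi)]

lemma addToBlock_eq_iff {M : Finset ℕ} {τ π : Finset (Finset ℕ)} {i j : ℕ}
    (hτ : IsPartition M τ) (hi : i ∈ M) (hπ : IsPartition (M.erase i) π)
    (hj : j ∈ M.erase i) :
    addToBlock π i (blockOf π j) = τ ↔ (π = partRemove τ {i} ∧ j ∈ blockOf τ i) := by
  obtain ⟨hji, hjM⟩ := mem_erase.mp hj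
  have hB₀π : blockOf π j ∈ π := blockOf_mem hπ hj
  have hjB₀ : j ∈ blockOf π j := mem_blockOf hπ hj
  have hiB₀ : i ∉ blockOf π j := not_mem_block hπ hB₀π
  unfold addToBlock
  constructor
  · intro h
    have hmem : insert i (blockOf π j) ∈ τ := h ▸ mem_insert_self _ _
    have hCi : blockOf τ i = insert i (blockOf π j) :=
      blockOf_eq hτ hmem (mem_insert_self _ _)
    have hjC : j ∈ blockOf τ i := hCi ▸ mem_insert_of_mem hjB₀
    have hCne : blockOf τ i ≠ {i} := fun h0 => hji (by rw [h0] at hjC; simpa using hjC)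
    refine ⟨?_, hjC⟩
    rw [partRemove_singleton_of_ne hτ hi hCne, hCi, Finset.erase_insert hiB₀]
    have hnm : insert i (blockOf π j) ∉ π.erase (blockOf π j) :=
      fun h0 => (not_mem_block hπ (erase_subset _ _ h0)) (mem_insert_self _ _)
    rw [← h, Finset.erase_insert hnm, insert_erase hB₀π]
  · rintro ⟨hπeq, hjC⟩
    have hCτ : blockOf τ i ∈ τ := blockOf_mem hτ hi
    have hiC : i ∈ blockOf τ i := mem_blockOf hτ hi
    have hCne : blockOf τ i ≠ {i} := fun h0 => hji (by rw [h0] at hjC; simpa using hjC)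
    have hπ' : π = insert ((blockOf τ i).erase i) (τ.erase (blockOf τ i)) :=
      hπeq.trans (partRemove_singleton_of_ne hτ hi hCne)
    have hCiτ : (blockOf τ i).erase i ∉ τ := by
      intro h'
      have h1 : blockOf τ j = (blockOf τ i).erase i :=
        blockOf_eq hτ h' (mem_erase.mpr ⟨hji, hjC⟩)
      have h2 : blockOf τ j = blockOf τ i := blockOf_eq hτ hCτ hjC
      rw [h2] at h1
      exact (Finset.notMem_erase i _) (h1 ▸ hiC)
    have hB₀ : blockOf π j = (blockOf τ i).erase i := by
      apply blockOf_eq hπ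
      · rw [hπ']; exact mem_insert_self _ _
      · exact mem_erase.mpr ⟨hji, hjC⟩
    rw [hB₀, insert_erase hiC, hπ', Finset.erase_insert
      (fun h0 => hCiτ (erase_subset _ _ h0)), insert_erase hCτ]

end TUX
namespace TUX
open Finset

lemma erase_blockOf_not_mem {M : Finset ℕ} {τ : Finset (Finset ℕ)} {i : ℕ}
    (hτ : IsPartition M τ) (hiM : i ∈ M) (hne : blockOf τ i ≠ {i}) :
    (blockOf τ i).erase i ∉ τ := by
  have hCτ : blockOf τ i ∈ τ := blockOf_mem hτ hiM
  have hiC : i ∈ blockOf τ i := mem_blockOf hτ hiM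
  have hCne : ((blockOf τ i).erase i).Nonempty := by
    rw [Finset.nonempty_iff_ne_empty]
    intro h0
    rcases (Finset.erase_eq_empty_iff _ _).mp h0 with h1 | h1
    · exact (Finset.notMem_empty i) (h1 ▸ hiC)
    · exact hne h1
  obtain ⟨j, hj⟩ := hCne
  obtain ⟨hji, hjC⟩ := mem_erase.mp hj
  intro h'
  have h1 : blockOf τ j = (blockOf τ i).erase i := blockOf_eq hτ h' hj
  have h2 : blockOf τ j = blockOf τ i := blockOf_eq hτ hCτ hjC
  rw [h2] at h1
  exact (Finset.notMem_erase i _) (h1 ▸ hiC)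

lemma restrict1_scaledDirac {N T : Finset ℕ} {τ : Finset (Finset ℕ)}
    (hT : T ⊆ N) (hτ : IsPartition (N \ T) τ) {i : ℕ} (hiN : i ∈ N) (hiT : i ∉ T)
    {R : Finset ℕ} {π : Finset (Finset ℕ)}
    (hπ : IsPartition ((N.erase i) \ R) π) :
    restrict1 N (scaledDirac N T τ) i R π
      = scaledDirac (N.erase i) T (partRemove τ {i}) R π := by
  by_cases hRT : R = T
  case neg => simp [restrict1, scaledDirac, hRT]
  subst hRT
  have hMe : N.erase i \ R = (N \ R).erase i := erase_sdiff_comm' N R i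
  have hπ' : IsPartition ((N \ R).erase i) π := hMe ▸ hπ
  have hiM : i ∈ N \ R := mem_sdiff.mpr ⟨hiN, hiT⟩
  have hCτ : blockOf τ i ∈ τ := blockOf_mem hτ hiM
  have hiC : i ∈ blockOf τ i := mem_blockOf hτ hiM
  have hA := insert_singleton_eq_iff hτ hiM hπ'
  have hB := fun j (hj : j ∈ (N \ R).erase i) => addToBlock_eq_iff hτ hiM hπ' hj
  have hm1 : 1 ≤ (N \ R).card := card_pos.mpr ⟨i, hiM⟩
  have hcard : ((N.card : ℝ) - (R.card : ℝ)) = ((N \ R).card : ℝ) := by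
    rw [card_sdiff_of_subset hT, Nat.cast_sub (card_le_card hT)]
  have hPpos : (0:ℝ) < ∏ B ∈ τ, ((B.card - 1).factorial : ℝ) :=
    Finset.prod_pos fun B _ => by exact_mod_cast Nat.factorial_pos _
  simp only [restrict1, scaledDirac, eq_self_iff_true, true_and, hcard]
  by_cases hπτ : π = partRemove τ {i}
  case neg =>
    rw [if_neg (fun hc => hπτ (hA.mp hc).2),
      Finset.sum_eq_zero (fun j hj => if_neg (fun hc => hπτ ((hB j hj).mp hc).1)),
      if_neg hπτ]
    simp
  rw [if_pos hπτ]
  have hsum : ∑ j ∈ (N \ R).erase i,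
      (if addToBlock π i (blockOf π j) = τ then (pstar (N \ R) τ)⁻¹ else 0)
      = (((blockOf τ i).erase i).card : ℝ) * (pstar (N \ R) τ)⁻¹ := by
    rw [← Finset.sum_filter]
    have hfil : ((N \ R).erase i).filter (fun j => addToBlock π i (blockOf π j) = τ)
        = (blockOf τ i).erase i := by
      ext j
      simp only [mem_filter]
      constructor
      · rintro ⟨hj, hc⟩
        exact mem_erase.mpr ⟨(mem_erase.mp hj).1, ((hB j hj).mp hc).2⟩
      · intro hj
        obtain ⟨hji, hjC⟩ := mem_erase.mp hj
        have hjM : j ∈ (N \ R).erase i := mem_erase.mpr ⟨hji, hτ.1 _ hCτ hjC⟩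
        exact ⟨hjM, (hB j hjM).mpr ⟨hπτ, hjC⟩⟩
    rw [hfil, Finset.sum_const, nsmul_eq_mul]
  rw [hsum, hMe]
  have hmfac : ((N \ R).card : ℝ) * (((N \ R).card - 1).factorial : ℝ)
      = ((N \ R).card.factorial : ℝ) := by exact_mod_cast Nat.mul_factorial_pred (Nat.one_le_iff_ne_zero.mp hm1)
  have hcarde : ((N \ R).erase i).card = (N \ R).card - 1 := card_erase_of_mem hiM
  by_cases hCsing : blockOf τ i = {i}
  · -- singleton block case
    rw [if_pos (hA.mpr ⟨hCsing, hπτ⟩)]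
    have hzero : ((blockOf τ i).erase i).card = 0 := by rw [hCsing]; simp
    have hP : ∏ B ∈ partRemove τ {i}, ((B.card - 1).factorial : ℝ)
        = ∏ B ∈ τ, ((B.card - 1).factorial : ℝ) := by
      rw [partRemove_singleton_of_eq hτ hiM hCsing]
      exact Finset.prod_erase _ (by simp)
    rw [hzero]
    unfold pstar
    rw [hP, hcarde]
    have hfpos : (0:ℝ) < ((N \ R).card.factorial : ℝ) := by
      exact_mod_cast Nat.factorial_pos _
    have hfpos' : (0:ℝ) < (((N \ R).card - 1).factorial : ℝ) := by
      exact_mod_cast Nat.factorial_pos _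
    have hmpos : (0:ℝ) < ((N \ R).card : ℝ) := by exact_mod_cast hm1
    field_simp
    push_cast
    nlinarith [hmfac, hPpos]
  · -- non-singleton block case
    rw [if_neg (fun hc => hCsing (hA.mp hc).1)]
    have hCiτ : (blockOf τ i).erase i ∉ τ := erase_blockOf_not_mem hτ hiM hCsing
    have hknz : ((blockOf τ i).erase i).Nonempty := by
      rw [Finset.nonempty_iff_ne_empty]
      intro h0
      rcases (Finset.erase_eq_empty_iff _ _).mp h0 with h1 | h1
      · exact (Finset.notMem_empty i) (h1 ▸ hiC)
      · exact hCsing h1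
    have hk1 : 1 ≤ ((blockOf τ i).erase i).card := card_pos.mpr hknz
    have hck : (blockOf τ i).card = ((blockOf τ i).erase i).card + 1 := by
      have := card_erase_of_mem hiC
      have hc1 : 1 ≤ (blockOf τ i).card := card_pos.mpr ⟨i, hiC⟩
      omega
    have hP' : ∏ B ∈ partRemove τ {i}, ((B.card - 1).factorial : ℝ)
        = (((((blockOf τ i).erase i).card - 1).factorial : ℕ) : ℝ)
          * ∏ B ∈ τ.erase (blockOf τ i), ((B.card - 1).factorial : ℝ) := by
      rw [partRemove_singleton_of_ne hτ hiM hCsing,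
        Finset.prod_insert (fun h0 => hCiτ (erase_subset _ _ h0))]
    have hP : ∏ B ∈ τ, ((B.card - 1).factorial : ℝ)
        = ((((blockOf τ i).erase i).card.factorial : ℕ) : ℝ)
          * ∏ B ∈ τ.erase (blockOf τ i), ((B.card - 1).factorial : ℝ) := by
      rw [← Finset.mul_prod_erase τ _ hCτ, hck]
      norm_num
    unfold pstar
    rw [hP', hP, hcarde]
    set k := ((blockOf τ i).erase i).card with hkdef
    set Q := ∏ B ∈ τ.erase (blockOf τ i), ((B.card - 1).factorial : ℝ) with hQdef
    have hQpos : (0:ℝ) < Q :=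
      Finset.prod_pos fun B _ => by exact_mod_cast Nat.factorial_pos _
    have hkfac : (k : ℝ) * ((k - 1).factorial : ℝ) = (k.factorial : ℝ) := by
      exact_mod_cast Nat.mul_factorial_pred (Nat.one_le_iff_ne_zero.mp hk1)
    have hfpos : (0:ℝ) < ((N \ R).card.factorial : ℝ) := by
      exact_mod_cast Nat.factorial_pos _
    have hfpos' : (0:ℝ) < (((N \ R).card - 1).factorial : ℝ) := by
      exact_mod_cast Nat.factorial_pos _
    have hkfpos : (0:ℝ) < ((k - 1).factorial : ℝ) := by
      exact_mod_cast Nat.factorial_pos _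
    have hkfpos' : (0:ℝ) < (k.factorial : ℝ) := by
      exact_mod_cast Nat.factorial_pos _
    have hmpos : (0:ℝ) < ((N \ R).card : ℝ) := by exact_mod_cast hm1
    field_simp
    linear_combination ((N \ R).card.factorial : ℝ) * hkfac - (k.factorial : ℝ) * hmfac

end TUX
namespace TUX
open Finset

lemma restrictL_zero : ∀ (l : List ℕ) (N : Finset ℕ) (w : Game) (R : Finset ℕ),
    (∀ π, w R π = 0) → ∀ ρ, restrictL N w l R ρ = 0
  | [], N, w, R, h, ρ => h ρ
  | i :: l, N, w, R, h, ρ => by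
    show restrictL (N.erase i) (restrict1 N w i) l R ρ = 0
    apply restrictL_zero
    intro π
    simp [restrict1, h]

lemma erase_sdiff_toFinset (N : Finset ℕ) (i : ℕ) (s : Finset ℕ) :
    (N.erase i) \ s = N \ (insert i s) := by
  ext x; simp [mem_erase, mem_sdiff]; tauto

lemma restrictL_congr : ∀ (l : List ℕ) (N : Finset ℕ), (∀ x ∈ l, x ∈ N) → l.Nodup →
    ∀ (w w' : Game) (R : Finset ℕ), R ⊆ N \ l.toFinset →
    (∀ π, IsPartition (N \ R) π → w R π = w' R π) →
    ∀ ρ, IsPartition ((N \ l.toFinset) \ R) ρ →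
      restrictL N w l R ρ = restrictL N w' l R ρ
  | [], N, hlN, hnd, w, w', R, hR, h, ρ, hρ => by
    apply h ρ
    simpa using hρ
  | i :: l, N, hlN, hnd, w, w', R, hR, h, ρ, hρ => by
    have hiN : i ∈ N := hlN i (by simp)
    have hil : i ∉ l := by simp [List.nodup_cons] at hnd; exact hnd.1
    have hRsub : R ⊆ N \ insert i l.toFinset := by simpa using hR
    have hiR : i ∉ R := fun hiR => by simpa using (hRsub hiR)
    show restrictL (N.erase i) (restrict1 N w i) l R ρ
      = restrictL (N.erase i) (restrict1 N w' i) l R ρ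
    apply restrictL_congr l (N.erase i)
      (fun x hx => mem_erase.mpr ⟨fun he => hil (he ▸ hx), hlN x (by simp [hx])⟩)
      ((List.nodup_cons.mp hnd).2)
    · rw [erase_sdiff_toFinset]; exact hRsub
    · intro π hπ
      have hπ' : IsPartition ((N \ R).erase i) π := by
        rwa [erase_sdiff_comm'] at hπ
      have hiM : i ∈ N \ R := mem_sdiff.mpr ⟨hiN, hiR⟩
      unfold restrict1
      rw [h _ (isPartition_insert_singleton hπ' hiM),
        Finset.sum_congr rfl (fun j hj => h _ (isPartition_addToBlock hπ' hiM hj))]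
    · rwa [erase_sdiff_toFinset, ← List.toFinset_cons]

lemma restrictL_scaledDirac : ∀ (l : List ℕ) (N T : Finset ℕ) (τ : Finset (Finset ℕ)),
    l.Nodup → (∀ x ∈ l, x ∈ N) → T ⊆ N → IsPartition (N \ T) τ →
    ∀ R ⊆ N \ l.toFinset, ∀ ρ, IsPartition ((N \ l.toFinset) \ R) ρ →
    restrictL N (scaledDirac N T τ) l R ρ =
      if l.toFinset ∩ T = ∅ then scaledDirac (N \ l.toFinset) T (partRemove τ l.toFinset) R ρ
      else 0
  | [], N, T, τ, hnd, hlN, hT, hτ, R, hR, ρ, hρ => by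
    simp [restrictL, partRemove_empty hτ.2.1]
  | i :: l, N, T, τ, hnd, hlN, hT, hτ, R, hR, ρ, hρ => by
    have hiN : i ∈ N := hlN i (by simp)
    have hnd' := (List.nodup_cons.mp hnd).2
    have hil := (List.nodup_cons.mp hnd).1
    simp only [List.toFinset_cons] at hR hρ ⊢
    have hiR : i ∉ R := fun hiR => by simpa using (hR hiR)
    show restrictL (N.erase i) (restrict1 N (scaledDirac N T τ) i) l R ρ = _
    by_cases hiT : i ∈ T
    · rw [if_neg (fun h0 => (Finset.notMem_empty i)
        (by rw [← h0]; exact mem_inter.mpr ⟨mem_insert_self i _, hiT⟩))]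
      apply restrictL_zero
      intro π
      have hRT : R ≠ T := fun he => hiR (he ▸ hiT)
      simp [restrict1, scaledDirac, hRT]
    · have hT' : T ⊆ N.erase i := Finset.subset_erase.mpr ⟨hT, hiT⟩
      have hτ' : IsPartition ((N.erase i) \ T) (partRemove τ {i}) := by
        rw [erase_sdiff_comm', ← sdiff_singleton_eq_erase]
        exact partRemove_isPartition hτ {i}
      have hR' : R ⊆ (N.erase i) \ l.toFinset := by
        rw [erase_sdiff_toFinset]; exact hR
      have hρ' : IsPartition (((N.erase i) \ l.toFinset) \ R) ρ := by
        rw [erase_sdiff_toFinset]; exact hρ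
      have hmem : ∀ x ∈ l, x ∈ N.erase i :=
        fun x hx => mem_erase.mpr ⟨fun he => hil (he ▸ hx), hlN x (by simp [hx])⟩
      rw [restrictL_congr l (N.erase i) hmem hnd'
        (restrict1 N (scaledDirac N T τ) i)
        (scaledDirac (N.erase i) T (partRemove τ {i})) R hR'
        (fun π hπ => restrict1_scaledDirac hT hτ hiN hiT hπ) ρ hρ']
      rw [restrictL_scaledDirac l (N.erase i) T (partRemove τ {i}) hnd' hmem hT' hτ' R hR' ρ hρ']
      rw [erase_sdiff_toFinset, partRemove_partRemove, ← Finset.insert_eq,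
        Finset.insert_inter_of_notMem hiT]

end TUX
open TUX in
/-- Restriction of scaled Dirac games. -/
theorem restrict_scaledDirac (N : Finset ℕ) (T : Finset ℕ) (τ : Finset (Finset ℕ))
    (hT : T ⊆ N) (hτ : IsPartition (N \ T) τ) (S : Finset ℕ) (hS : S ⊆ N) :
    ∀ R ⊆ N \ S, ∀ ρ, IsPartition ((N \ S) \ R) ρ →
      (if S ∩ T = ∅ then
          restrictSet N (scaledDirac N T τ) S R ρ = scaledDirac (N \ S) T (partRemove τ S) R ρ
        else
          restrictSet N (scaledDirac N T τ) S R ρ = 0) := by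
  intro R hR ρ hρ
  have h := restrictL_scaledDirac (S.sort (· ≤ ·)) N T τ (Finset.sort_nodup _ _)
    (fun x hx => hS ((Finset.mem_sort _).mp hx)) hT hτ R
    (by rwa [Finset.sort_toFinset]) ρ (by rwa [Finset.sort_toFinset])
  rw [Finset.sort_toFinset] at h
  unfold restrictSet
  split_ifs with hc
  · rwa [if_pos hc] at h
  · rwa [if_neg hc] at h
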